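/- (Strong convexity of the graph objective.) If μ₂ > 0, λ > 0 and δ > 0, then the graph objective h(w) = Σ_{k<l} w_{k,l}·( p_{k,l} + (μ₁/2)·Δ_{k,l} ) + μ₂·( λ‖w‖₂² − Σ_{k=1}^K log(d_k(w) + δ) ) is σ-strongly convex with σ = 2μ₂λ on the nonnegative orthant {w ∈ ℝ^{K(K−1)/2} : w ≥ 0}, with respect to the Euclidean norm. -/
import Mathlib


open scoped BigOperators

/-- Coordinates are indexed by unordered pairs of distinct elements of `[K]`,
represented as ordered pairs `(i,j)` with `i < j`; there are `K(K−1)/2` of them. -/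
abbrev PairIdx (K : ℕ) := {q : Fin K × Fin K // q.1 < q.2}

/-- Weight vectors live in `ℝ^{K(K−1)/2}` with the Euclidean structure. -/
abbrev GVec (K : ℕ) := EuclideanSpace ℝ (PairIdx K)

/-- Degree of user `k`: `d_k(w) = Σ_{l≠k} w_{k,l}`. -/
noncomputable def deg {K : ℕ} (w : GVec K) (k : Fin K) : ℝ :=
  ∑ q : PairIdx K, (if q.1.1 = k ∨ q.1.2 = k then w q else 0)

/-- The graph objective
`h(w) = Σ_{k<l} w_{k,l}(p_{k,l} + (μ₁/2)Δ_{k,l}) + μ₂(λ‖w‖² − Σ_k log(d_k(w) + δ))`. -/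
noncomputable def hObj {K : ℕ} (P Δ : Fin K → Fin K → ℝ) (μ₁ μ₂ lam δ : ℝ)
    (w : GVec K) : ℝ :=
  (∑ q : PairIdx K, w q * (P q.1.1 q.1.2 + μ₁ / 2 * Δ q.1.1 q.1.2))
    + μ₂ * (lam * (∑ q : PairIdx K, (w q) ^ 2)
        - ∑ k : Fin K, Real.log (deg w k + δ))

/-- Strong convexity of the graph objective.
If `μ₂ > 0`, `λ > 0`, `δ > 0`, the graph objective is `σ`-strongly convex with
`σ = 2μ₂λ` on the nonnegative orthant, w.r.t. the Euclidean norm. -/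
theorem graph_objective_strong_convexity
    (K : ℕ) (hK : 2 ≤ K)
    (P Δ : Fin K → Fin K → ℝ) (hP : ∀ k l, 0 ≤ P k l) (hΔ : ∀ k l, 0 ≤ Δ k l)
    (μ₁ μ₂ lam δ : ℝ) (hμ₁ : 0 ≤ μ₁) (hμ₂ : 0 < μ₂) (hlam : 0 < lam) (hδ : 0 < δ) :
    ∀ x y : GVec K, (∀ q, 0 ≤ x q) → (∀ q, 0 ≤ y q) →
      ∀ a : ℝ, 0 ≤ a → a ≤ 1 →
        hObj P Δ μ₁ μ₂ lam δ (a • x + (1 - a) • y)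
          ≤ a * hObj P Δ μ₁ μ₂ lam δ x + (1 - a) * hObj P Δ μ₁ μ₂ lam δ y
            - (2 * μ₂ * lam) / 2 * (a * (1 - a)) * ‖x - y‖ ^ 2 := by
  intro x y hx hy a ha ha1
  set z : GVec K := a • x + (1 - a) • y with hzdef
  have hz : ∀ q, z q = a * x q + (1 - a) * y q := by
    intro q; simp [hzdef]
  -- linear term
  have hL : (∑ q : PairIdx K, z q * (P q.1.1 q.1.2 + μ₁ / 2 * Δ q.1.1 q.1.2))
      = a * (∑ q : PairIdx K, x q * (P q.1.1 q.1.2 + μ₁ / 2 * Δ q.1.1 q.1.2))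
        + (1 - a) * (∑ q : PairIdx K, y q * (P q.1.1 q.1.2 + μ₁ / 2 * Δ q.1.1 q.1.2)) := by
    rw [Finset.mul_sum, Finset.mul_sum, ← Finset.sum_add_distrib]
    refine Finset.sum_congr rfl fun q _ => by rw [hz]; ring
  -- quadratic term
  have hQ : (∑ q : PairIdx K, (z q) ^ 2)
      = a * (∑ q : PairIdx K, (x q) ^ 2) + (1 - a) * (∑ q : PairIdx K, (y q) ^ 2)
        - a * (1 - a) * (∑ q : PairIdx K, (x q - y q) ^ 2) := by
    rw [Finset.mul_sum, Finset.mul_sum, Finset.mul_sum, ← Finset.sum_add_distrib,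
      ← Finset.sum_sub_distrib]
    refine Finset.sum_congr rfl fun q _ => by rw [hz]; ring
  -- norm squared
  have hN : ‖x - y‖ ^ 2 = ∑ q : PairIdx K, (x q - y q) ^ 2 := by
    rw [EuclideanSpace.norm_eq, Real.sq_sqrt (Finset.sum_nonneg fun q _ => sq_nonneg _)]
    refine Finset.sum_congr rfl fun q _ => by simp [sq_abs]
  -- degree linearity and nonnegativity
  have hdegz : ∀ k, deg z k = a * deg x k + (1 - a) * deg y k := by
    intro k
    unfold deg
    rw [Finset.mul_sum, Finset.mul_sum, ← Finset.sum_add_distrib]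
    refine Finset.sum_congr rfl fun q _ => by
      by_cases h : q.1.1 = k ∨ q.1.2 = k <;> simp [h, hz q] <;> ring
  have hdnn : ∀ (w : GVec K), (∀ q, 0 ≤ w q) → ∀ k, 0 ≤ deg w k := by
    intro w hw k
    exact Finset.sum_nonneg fun q _ => by by_cases h : q.1.1 = k ∨ q.1.2 = k <;> simp [h, hw q]
  -- log concavity
  have hlog : a * (∑ k : Fin K, Real.log (deg x k + δ))
      + (1 - a) * (∑ k : Fin K, Real.log (deg y k + δ))
      ≤ ∑ k : Fin K, Real.log (deg z k + δ) := by
    rw [Finset.mul_sum, Finset.mul_sum, ← Finset.sum_add_distrib]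
    refine Finset.sum_le_sum fun k _ => ?_
    have h1 : (0:ℝ) < deg x k + δ := by linarith [hdnn x hx k]
    have h2 : (0:ℝ) < deg y k + δ := by linarith [hdnn y hy k]
    have := strictConcaveOn_log_Ioi.concaveOn.2 (Set.mem_Ioi.2 h1) (Set.mem_Ioi.2 h2)
      ha (by linarith : (0:ℝ) ≤ 1 - a) (by ring)
    rw [hdegz k]
    have heq : a * (deg x k + δ) + (1 - a) * (deg y k + δ)
        = a * deg x k + (1 - a) * deg y k + δ := by ring
    simpa [smul_eq_mul, heq] using this
  -- assemble
  show (∑ q : PairIdx K, z q * (P q.1.1 q.1.2 + μ₁ / 2 * Δ q.1.1 q.1.2))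
      + μ₂ * (lam * (∑ q : PairIdx K, (z q) ^ 2) - ∑ k : Fin K, Real.log (deg z k + δ)) ≤ _
  rw [hL, hQ]
  unfold hObj
  rw [hN]
  nlinarith [mul_le_mul_of_nonneg_left hlog hμ₂.le]
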